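/- Under the isentropic condition n_I' = n_I ε_I'/(p_I + ε_I), the Lagrange stationarity conditions for extremizing M at fixed N₁, N₂ imply the two-fluid TOV equation p_I' = −(ε_I + p_I)(m_t + 4π r³ p_t)/(r(r − 2m_t)) for each fluid I. -/

import Mathlib

open Real Set

lemma tov_algebra (pi r mtr a v w k lam N p e et pt st Fd P' : ℝ)
    (hr : 0 < r) (ha : 0 < a) (hs : 0 < p + e) (hN : 0 < N) (hv : 0 < v) (hlam : lam ≠ 0)
    (haeq : a * r = r - 2 * mtr)
    (hwa : w * a = v)
    (hk : lam * v * N = k * (p + e))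
    (hst : st = pt + et)
    (hFa : Fd * a = -(4 * pi) * r * k * st)
    (hE : -(1/2) * (2 * mtr - 8 * pi * r ^ 3 * et) * (lam * w * N) * (p + e) ^ 2
            - (lam * v * N) * P' * (p + e) * r ^ 2
            + Fd * (p + e) ^ 3 * r ^ 2 = 0) :
    P' = -(e + p) * (mtr + 4 * pi * r ^ 3 * pt) / (r * (r - 2 * mtr)) := by
  have hk0 : k ≠ 0 := by
    intro h
    have h0 : lam * v * N = 0 := by rw [hk, h]; ring
    rcases mul_eq_zero.1 h0 with h1 | h2
    · rcases mul_eq_zero.1 h1 with h3 | h4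
      · exact hlam h3
      · exact hv.ne' h4
    · exact hN.ne' h2
  have hrm : 0 < r - 2 * mtr := by rw [← haeq]; positivity
  have hkw : lam * w * N * a = k * (p + e) := by
    have h : lam * w * N * a = lam * v * N := by rw [← hwa]; ring
    rw [h, hk]
  have e3 : k * (p + e) ^ 2 * (P' * (a * r ^ 2))
      + (1/2) * (2 * mtr - 8 * pi * r ^ 3 * et) * k * (p + e) ^ 3
      - Fd * a * (p + e) ^ 3 * r ^ 2 = 0 := by
    linear_combination (-a) * hE
      - (1/2) * (2 * mtr - 8 * pi * r ^ 3 * et) * (p + e) ^ 2 * hkw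
      - P' * (p + e) * r ^ 2 * a * hk
  have e5 : k * (p + e) ^ 2 * (P' * (a * r ^ 2))
      = k * (p + e) ^ 2 * ((p + e)
          * (-(1/2) * (2 * mtr - 8 * pi * r ^ 3 * et) - 4 * pi * r ^ 3 * st)) := by
    linear_combination e3 + (p + e) ^ 3 * r ^ 2 * hFa
  have e6 : P' * (a * r ^ 2) = (p + e)
      * (-(1/2) * (2 * mtr - 8 * pi * r ^ 3 * et) - 4 * pi * r ^ 3 * st) :=
    mul_left_cancel₀ (by positivity) e5
  rw [eq_div_iff (by positivity : r * (r - 2 * mtr) ≠ 0)]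
  linear_combination e6 - P' * r * haeq - 4 * pi * r ^ 3 * (e + p) * hst

/-- Under the isentropic condition and the Lagrange stationarity condition with the
nonlocal multiplier function `F`, each fluid obeys the two-fluid TOV equation. -/
theorem stationarity_implies_two_fluid_TOV
    (R : ℝ) (n₁ n₂ p₁ p₂ ε₁ ε₂ mt F A : ℝ → ℝ) (lam₁ lam₂ : ℝ)
    (hA : ∀ r, A r = 1 - 2 * mt r / r)
    (hlam₁ : lam₁ ≠ 0) (hlam₂ : lam₂ ≠ 0)
    (hApos : ∀ r ∈ Ioo (0:ℝ) R, 0 < A r)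
    (hn₁pos : ∀ r ∈ Ioo (0:ℝ) R, 0 < n₁ r)
    (hn₂pos : ∀ r ∈ Ioo (0:ℝ) R, 0 < n₂ r)
    (h1pos : ∀ r ∈ Ioo (0:ℝ) R, 0 < p₁ r + ε₁ r)
    (h2pos : ∀ r ∈ Ioo (0:ℝ) R, 0 < p₂ r + ε₂ r)
    -- stationarity conditions on the whole interval
    (hstat1 : ∀ r ∈ Ioo (0:ℝ) R,
      lam₁ * (A r) ^ (-(1:ℝ)/2) * n₁ r / (p₁ r + ε₁ r) + F r = 1)
    (hstat2 : ∀ r ∈ Ioo (0:ℝ) R,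
      lam₂ * (A r) ^ (-(1:ℝ)/2) * n₂ r / (p₂ r + ε₂ r) + F r = 1)
    (r : ℝ) (hr : r ∈ Ioo (0:ℝ) R)
    (e₁' e₂' P₁' P₂' : ℝ)
    -- differentiability data at r
    (hε₁ : HasDerivAt ε₁ e₁' r) (hε₂ : HasDerivAt ε₂ e₂' r)
    (hp₁ : HasDerivAt p₁ P₁' r) (hp₂ : HasDerivAt p₂ P₂' r)
    -- isentropic condition n_I' = n_I ε_I' / (p_I + ε_I)
    (hn₁ : HasDerivAt n₁ (n₁ r * e₁' / (p₁ r + ε₁ r)) r)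
    (hn₂ : HasDerivAt n₂ (n₂ r * e₂' / (p₂ r + ε₂ r)) r)
    -- mass function: m_t' = 4π r² ε_t
    (hm : HasDerivAt mt (4 * π * r ^ 2 * (ε₁ r + ε₂ r)) r)
    -- F' = −4π Σ_J λ_J r A^{−3/2} n_J
    (hF : HasDerivAt F
      (-(4 * π) * (lam₁ * r * (A r) ^ (-(3:ℝ)/2) * n₁ r
        + lam₂ * r * (A r) ^ (-(3:ℝ)/2) * n₂ r)) r) :
    P₁' = -(ε₁ r + p₁ r) * (mt r + 4 * π * r ^ 3 * (p₁ r + p₂ r))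
            / (r * (r - 2 * mt r)) ∧
    P₂' = -(ε₂ r + p₂ r) * (mt r + 4 * π * r ^ 3 * (p₁ r + p₂ r))
            / (r * (r - 2 * mt r)) := by
  
  obtain ⟨hr0, hrR⟩ := hr
  have hrmem : r ∈ Ioo (0:ℝ) R := ⟨hr0, hrR⟩
  have hrne : r ≠ 0 := ne_of_gt hr0
  have haA : 0 < A r := hApos r hrmem
  have hs₁ : 0 < p₁ r + ε₁ r := h1pos r hrmem
  have hs₂ : 0 < p₂ r + ε₂ r := h2pos r hrmem
  have hs₁ne : p₁ r + ε₁ r ≠ 0 := hs₁.ne'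
  have hs₂ne : p₂ r + ε₂ r ≠ 0 := hs₂.ne'
  have hN₁ : 0 < n₁ r := hn₁pos r hrmem
  have hN₂ : 0 < n₂ r := hn₂pos r hrmem
  have hv : 0 < A r ^ (-(1:ℝ)/2) := rpow_pos_of_pos haA _
  have hwa : A r ^ (-(3:ℝ)/2) * A r = A r ^ (-(1:ℝ)/2) := by
    have h : A r ^ (-(3:ℝ)/2) * A r ^ (1:ℝ) = A r ^ (-(3:ℝ)/2 + 1) :=
      (Real.rpow_add haA _ _).symm
    rw [Real.rpow_one] at h
    rw [h]; norm_num
  have haeq : A r * r = r - 2 * mt r := by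
    rw [hA r]; field_simp
  have hAfun : A = fun x => 1 - 2 * mt x / x := funext hA
  have hAd : HasDerivAt A ((2 * mt r - 8 * π * r ^ 3 * (ε₁ r + ε₂ r)) / r ^ 2) r := by
    rw [hAfun]
    have h2 : HasDerivAt (fun x => 2 * mt x / x)
        (((2 * (4 * π * r ^ 2 * (ε₁ r + ε₂ r))) * r - (2 * mt r) * 1) / r ^ 2) r :=
      (hm.const_mul 2).div (hasDerivAt_id r) hrne
    have h3 := (hasDerivAt_const r (1:ℝ)).sub h2
    refine h3.congr_deriv ?_
    field_simp
    ring
  have hud : HasDerivAt (fun x => A x ^ (-(1:ℝ)/2))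
      ((2 * mt r - 8 * π * r ^ 3 * (ε₁ r + ε₂ r)) / r ^ 2 * (-(1:ℝ)/2)
        * A r ^ (-(3:ℝ)/2)) r := by
    have h := hAd.rpow_const (p := -(1:ℝ)/2) (Or.inl haA.ne')
    have hexp : (-(1:ℝ)/2 - 1) = -(3:ℝ)/2 := by norm_num
    rwa [hexp] at h
  have hk1 : lam₁ * (A r ^ (-(1:ℝ)/2)) * n₁ r = (1 - F r) * (p₁ r + ε₁ r) := by
    have h := hstat1 r hrmem
    rw [div_add' _ _ _ hs₁ne, div_eq_iff hs₁ne] at h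
    linear_combination h
  have hk2 : lam₂ * (A r ^ (-(1:ℝ)/2)) * n₂ r = (1 - F r) * (p₂ r + ε₂ r) := by
    have h := hstat2 r hrmem
    rw [div_add' _ _ _ hs₂ne, div_eq_iff hs₂ne] at h
    linear_combination h
  have hkw1 : lam₁ * (A r ^ (-(3:ℝ)/2)) * n₁ r * A r = (1 - F r) * (p₁ r + ε₁ r) := by
    linear_combination lam₁ * n₁ r * hwa + hk1
  have hkw2 : lam₂ * (A r ^ (-(3:ℝ)/2)) * n₂ r * A r = (1 - F r) * (p₂ r + ε₂ r) := by
    linear_combination lam₂ * n₂ r * hwa + hk2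
  have hFa : (-(4 * π) * (lam₁ * r * (A r) ^ (-(3:ℝ)/2) * n₁ r
        + lam₂ * r * (A r) ^ (-(3:ℝ)/2) * n₂ r)) * A r
      = -(4 * π) * r * (1 - F r) * ((p₁ r + ε₁ r) + (p₂ r + ε₂ r)) := by
    linear_combination (-(4 * π) * r) * hkw1 + (-(4 * π) * r) * hkw2
  have hg1z : HasDerivAt (fun x => lam₁ * A x ^ (-(1:ℝ)/2) * n₁ x / (p₁ x + ε₁ x) + F x)
      0 r := by
    apply (hasDerivAt_const r (1:ℝ)).congr_of_eventuallyEq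
    filter_upwards [isOpen_Ioo.mem_nhds hrmem] with x hx using hstat1 x hx
  have hD1 := ((((hud.const_mul lam₁).mul hn₁).div (hp₁.add hε₁) hs₁.ne').add hF).unique hg1z
  have hg2z : HasDerivAt (fun x => lam₂ * A x ^ (-(1:ℝ)/2) * n₂ x / (p₂ x + ε₂ x) + F x)
      0 r := by
    apply (hasDerivAt_const r (1:ℝ)).congr_of_eventuallyEq
    filter_upwards [isOpen_Ioo.mem_nhds hrmem] with x hx using hstat2 x hx
  have hD2 := ((((hud.const_mul lam₂).mul hn₂).div (hp₂.add hε₂) hs₂.ne').add hF).unique hg2z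
  have hE1 : -(1/2) * (2 * mt r - 8 * π * r ^ 3 * (ε₁ r + ε₂ r))
        * (lam₁ * (A r ^ (-(3:ℝ)/2)) * n₁ r) * (p₁ r + ε₁ r) ^ 2
      - (lam₁ * (A r ^ (-(1:ℝ)/2)) * n₁ r) * P₁' * (p₁ r + ε₁ r) * r ^ 2
      + (-(4 * π) * (lam₁ * r * (A r) ^ (-(3:ℝ)/2) * n₁ r
          + lam₂ * r * (A r) ^ (-(3:ℝ)/2) * n₂ r)) * (p₁ r + ε₁ r) ^ 3 * r ^ 2 = 0 := by
    simp only [Pi.mul_apply, Pi.add_apply, neg_div] at hD1 ⊢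
    field_simp at hD1
    linear_combination ((p₁ r + ε₁ r)/2) * hD1
  have hE2 : -(1/2) * (2 * mt r - 8 * π * r ^ 3 * (ε₁ r + ε₂ r))
        * (lam₂ * (A r ^ (-(3:ℝ)/2)) * n₂ r) * (p₂ r + ε₂ r) ^ 2
      - (lam₂ * (A r ^ (-(1:ℝ)/2)) * n₂ r) * P₂' * (p₂ r + ε₂ r) * r ^ 2
      + (-(4 * π) * (lam₁ * r * (A r) ^ (-(3:ℝ)/2) * n₁ r
          + lam₂ * r * (A r) ^ (-(3:ℝ)/2) * n₂ r)) * (p₂ r + ε₂ r) ^ 3 * r ^ 2 = 0 := by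
    simp only [Pi.mul_apply, Pi.add_apply, neg_div] at hD2 ⊢
    field_simp at hD2
    linear_combination ((p₂ r + ε₂ r)/2) * hD2
  constructor
  · exact tov_algebra π r (mt r) (A r) (A r ^ (-(1:ℝ)/2)) (A r ^ (-(3:ℝ)/2)) (1 - F r)
      lam₁ (n₁ r) (p₁ r) (ε₁ r) (ε₁ r + ε₂ r) (p₁ r + p₂ r)
      ((p₁ r + ε₁ r) + (p₂ r + ε₂ r))
      (-(4 * π) * (lam₁ * r * (A r) ^ (-(3:ℝ)/2) * n₁ r
          + lam₂ * r * (A r) ^ (-(3:ℝ)/2) * n₂ r)) P₁'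
      hr0 haA hs₁ hN₁ hv hlam₁ haeq hwa hk1 (by ring) hFa hE1
  · exact tov_algebra π r (mt r) (A r) (A r ^ (-(1:ℝ)/2)) (A r ^ (-(3:ℝ)/2)) (1 - F r)
      lam₂ (n₂ r) (p₂ r) (ε₂ r) (ε₁ r + ε₂ r) (p₁ r + p₂ r)
      ((p₁ r + ε₁ r) + (p₂ r + ε₂ r))
      (-(4 * π) * (lam₁ * r * (A r) ^ (-(3:ℝ)/2) * n₁ r
          + lam₂ * r * (A r) ^ (-(3:ℝ)/2) * n₂ r)) P₂'
      hr0 haA hs₂ hN₂ hv hlam₂ haeq hwa hk2 (by ring) hFa hE2
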